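/- Let G be a group of automorphisms of a finite generalised quadrangle of order (s,t) acting transitively on the point set, and let O be an orbit of G on lines. Then st+1 divides |O|. -/

import Mathlib

/-- A (finite) generalised quadrangle of order `(s, t)`: every line is incident
with exactly `s + 1` points, every point is incident with exactly `t + 1` lines,
any two distinct points lie on at most one common line, and for every
non-incident point-line pair `(p, l)` there is a unique point on `l`
collinear with `p`. -/
structure GenQuadrangle (P L : Type*) (s t : ℕ) where
  inc : P → L → Prop
  pts_per_line : ∀ l : L, Nat.card {p : P // inc p l} = s + 1
  lines_per_pt : ∀ p : P, Nat.card {l : L // inc p l} = t + 1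
  unique_line : ∀ ⦃p q : P⦄ ⦃l m : L⦄, p ≠ q →
      inc p l → inc q l → inc p m → inc q m → l = m
  gq_axiom : ∀ (p : P) (l : L), ¬ inc p l →
      ∃! q : P, inc q l ∧ ∃ m : L, inc p m ∧ inc q m

/-- Two points are collinear if they are distinct and lie on a common line. -/
def GenQuadrangle.Collinear {P L : Type*} {s t : ℕ} (Q : GenQuadrangle P L s t)
    (p q : P) : Prop :=
  p ≠ q ∧ ∃ l : L, Q.inc p l ∧ Q.inc q l


open Finset
open scoped Classical
set_option linter.unusedSectionVars false

section Aux
variable {P L : Type*} [Fintype P] [Fintype L] {s t : ℕ} (Q : GenQuadrangle P L s t)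

lemma ptsOn_card (l : L) : (univ.filter fun p => Q.inc p l).card = s + 1 := by
  have := Q.pts_per_line l
  rwa [Nat.card_eq_fintype_card, Fintype.card_subtype] at this

lemma linesThru_card (p : P) : (univ.filter fun l => Q.inc p l).card = t + 1 := by
  have := Q.lines_per_pt p
  rwa [Nat.card_eq_fintype_card, Fintype.card_subtype] at this

lemma collinear_card (p : P) :
    (univ.filter fun q => Q.Collinear p q).card = s * (t + 1) := by
  have hset : (univ.filter fun q => Q.Collinear p q) =
      (univ.filter fun l => Q.inc p l).biUnion
        (fun l => (univ.filter fun q => Q.inc q l).erase p) := by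
    ext q
    simp only [mem_filter, mem_biUnion, mem_erase, mem_univ, true_and]
    constructor
    · rintro ⟨hne, l, hpl, hql⟩
      exact ⟨l, hpl, Ne.symm hne, hql⟩
    · rintro ⟨l, hpl, hne, hql⟩
      exact ⟨Ne.symm hne, l, hpl, hql⟩
  rw [hset, card_biUnion]
  · rw [sum_congr rfl (fun l hl => ?_), sum_const, linesThru_card Q p,
      smul_eq_mul, mul_comm]
    rw [card_erase_of_mem, ptsOn_card Q l]
    · simp
    · simp only [mem_filter, mem_univ, true_and] at hl ⊢; exact hl
  · intro l hl m hm hlm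
    simp only [mem_coe, mem_filter, mem_univ, true_and] at hl hm
    rw [Function.onFun, Finset.disjoint_left]
    intro x hx hx'
    simp only [mem_erase, mem_filter, mem_univ, true_and] at hx hx'
    exact hlm (Q.unique_line (Ne.symm hx.1) hl hx.2 hm hx'.2)

lemma noncollinear_card (p : P) :
    (univ.filter fun q => q ≠ p ∧ ¬ Q.Collinear p q).card = s * (s * t) := by
  obtain ⟨l, hl⟩ : ∃ l, Q.inc p l := by
    have h := linesThru_card Q p
    have : (univ.filter fun l => Q.inc p l).Nonempty := by
      rw [← card_pos, h]; omega
    obtain ⟨l, hl⟩ := this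
    exact ⟨l, (mem_filter.mp hl).2⟩
  have hset : (univ.filter fun q => q ≠ p ∧ ¬ Q.Collinear p q) =
      ((univ.filter fun r => Q.inc r l).erase p).biUnion (fun r =>
        ((univ.filter fun m => Q.inc r m).erase l).biUnion (fun m =>
          (univ.filter fun q => Q.inc q m).erase r)) := by
    ext q
    simp only [mem_filter, mem_biUnion, mem_erase, mem_univ, true_and]
    constructor
    · rintro ⟨hqp, hnc⟩
      have hql : ¬ Q.inc q l := fun h => hnc ⟨Ne.symm hqp, l, hl, h⟩
      obtain ⟨r, ⟨hrl, m, hqm, hrm⟩, -⟩ := Q.gq_axiom q l hql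
      have hrp : r ≠ p := by
        rintro rfl
        exact hnc ⟨Ne.symm hqp, m, hrm, hqm⟩
      have hml : m ≠ l := fun h => hql (h ▸ hqm)
      have hqr : q ≠ r := fun h => hql (h ▸ hrl)
      exact ⟨r, ⟨hrp, hrl⟩, m, ⟨hml, hrm⟩, hqr, hqm⟩
    · rintro ⟨r, ⟨hrp, hrl⟩, m, ⟨hml, hrm⟩, hqr, hqm⟩
      have hpm : ¬ Q.inc p m := fun h => hml (Q.unique_line (Ne.symm hrp) h hrm hl hrl)
      have hqp : q ≠ p := fun h => hpm (h ▸ hqm)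
      refine ⟨hqp, ?_⟩
      rintro ⟨-, n, hpn, hqn⟩
      obtain ⟨x, -, hx⟩ := Q.gq_axiom p m hpm
      have h1 : r = x := hx r ⟨hrm, l, hl, hrl⟩
      have h2 : q = x := hx q ⟨hqm, n, hpn, hqn⟩
      exact hqr (h2 ▸ h1 ▸ rfl)
  have hR : ((univ.filter fun r => Q.inc r l).erase p).card = s := by
    rw [card_erase_of_mem, ptsOn_card Q l]
    · simp
    · simp only [mem_filter, mem_univ, true_and]; exact hl
  have hinner : ∀ r ∈ (univ.filter fun r => Q.inc r l).erase p,
      (((univ.filter fun m => Q.inc r m).erase l).biUnion (fun m =>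
        (univ.filter fun q => Q.inc q m).erase r)).card = t * s := by
    intro r hr
    simp only [mem_erase, mem_filter, mem_univ, true_and] at hr
    have hM : ((univ.filter fun m => Q.inc r m).erase l).card = t := by
      rw [card_erase_of_mem, linesThru_card Q r]
      · simp
      · simp only [mem_filter, mem_univ, true_and]; exact hr.2
    have hpts : ∀ m ∈ (univ.filter fun m => Q.inc r m).erase l,
        ((univ.filter fun q => Q.inc q m).erase r).card = s := by
      intro m hm
      simp only [mem_erase, mem_filter, mem_univ, true_and] at hm
      rw [card_erase_of_mem, ptsOn_card Q m]
      · simp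
      · simp only [mem_filter, mem_univ, true_and]; exact hm.2
    rw [card_biUnion, Finset.sum_congr rfl hpts, sum_const, hM, smul_eq_mul]
    intro m hm m' hm' hmm
    simp only [mem_coe, mem_erase, mem_filter, mem_univ, true_and] at hm hm'
    rw [Function.onFun, Finset.disjoint_left]
    intro x hx hx'
    simp only [mem_erase, mem_filter, mem_univ, true_and] at hx hx'
    exact hmm (Q.unique_line hx.1 hx.2 hm.2 hx'.2 hm'.2)
  rw [hset, card_biUnion, Finset.sum_congr rfl hinner, sum_const, hR, smul_eq_mul]
  · ring
  · intro r hr r' hr' hrr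
    simp only [mem_coe, mem_erase, mem_filter, mem_univ, true_and] at hr hr'
    rw [Function.onFun, Finset.disjoint_left]
    intro q hq hq'
    simp only [mem_biUnion, mem_erase, mem_filter, mem_univ, true_and] at hq hq'
    obtain ⟨m, ⟨hml, hrm⟩, hqr, hqm⟩ := hq
    obtain ⟨m', ⟨hml', hrm'⟩, hqr', hqm'⟩ := hq'
    have hql : ¬ Q.inc q l := by
      intro h
      exact hml (Q.unique_line hqr hqm hrm h hr.2)
    obtain ⟨x, -, hx⟩ := Q.gq_axiom q l hql
    have h1 : r = x := hx r ⟨hr.2, m, hqm, hrm⟩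
    have h2 : r' = x := hx r' ⟨hr'.2, m', hqm', hrm'⟩
    exact hrr (h2 ▸ h1 ▸ rfl)



include Q in
lemma card_P (p : P) : Fintype.card P = (s + 1) * (s * t + 1) := by
  have h1 := collinear_card Q p
  have h2 := noncollinear_card Q p
  have hu : (univ : Finset P) = {p} ∪ (univ.filter fun q => Q.Collinear p q)
      ∪ (univ.filter fun q => q ≠ p ∧ ¬ Q.Collinear p q) := by
    ext q
    simp only [mem_union, mem_singleton, mem_filter, mem_univ, true_and]
    by_cases hq : q = p
    · tauto
    · tauto
  have d1 : Disjoint ({p} : Finset P) (univ.filter fun q => Q.Collinear p q) := by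
    rw [Finset.disjoint_left]
    intro x hx hx'
    simp only [mem_singleton] at hx
    simp only [mem_filter, mem_univ, true_and] at hx'
    exact hx'.1 hx.symm
  have d2 : Disjoint ({p} ∪ (univ.filter fun q => Q.Collinear p q))
      (univ.filter fun q => q ≠ p ∧ ¬ Q.Collinear p q) := by
    rw [Finset.disjoint_left]
    intro x hx hx'
    simp only [mem_union, mem_singleton, mem_filter, mem_univ, true_and] at hx hx'
    rcases hx with h | h
    · exact hx'.1 h
    · exact hx'.2 h
  rw [← card_univ, hu, card_union_of_disjoint d2, card_union_of_disjoint d1,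
    card_singleton, h1, h2]
  ring

end Aux

theorem card_line_orbit_dvd_aux {P L : Type*} [Fintype P] [Fintype L]
    {s t : ℕ} (hs : 1 ≤ s) (ht : 1 ≤ t) (Q : GenQuadrangle P L s t)
    (G : Type*) [Group G] [MulAction G P] [MulAction G L]
    (hcompat : ∀ (g : G) (p : P) (l : L), Q.inc p l ↔ Q.inc (g • p) (g • l))
    [MulAction.IsPretransitive G P] (l₀ : L) :
    (s * t + 1) ∣ Nat.card (MulAction.orbit G l₀) := by
  classical
  set O : Set L := MulAction.orbit G l₀ with hO
  have hOinv : ∀ (g : G) (l : L), l ∈ O → g • l ∈ O := by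
    rintro g l ⟨h, rfl⟩
    exact ⟨g * h, mul_smul g h l₀⟩
  -- P is nonempty
  obtain ⟨p₀, -⟩ : ∃ p : P, Q.inc p l₀ := by
    have h := ptsOn_card Q l₀
    have hne : (univ.filter fun p => Q.inc p l₀).Nonempty := by
      rw [← card_pos, h]; omega
    obtain ⟨p, hp⟩ := hne
    exact ⟨p, (mem_filter.mp hp).2⟩
  set n : P → ℕ := fun p => (univ.filter fun l => l ∈ O ∧ Q.inc p l).card with hn
  have hconst : ∀ p, n p = n p₀ := by
    intro p
    obtain ⟨g, hg⟩ := MulAction.exists_smul_eq G p₀ p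
    have himg : (univ.filter fun l => l ∈ O ∧ Q.inc p l)
        = (univ.filter fun l => l ∈ O ∧ Q.inc p₀ l).image (fun l => g • l) := by
      ext l
      simp only [mem_image, mem_filter, mem_univ, true_and]
      constructor
      · rintro ⟨hlO, hpl⟩
        refine ⟨g⁻¹ • l, ⟨hOinv g⁻¹ l hlO, ?_⟩, smul_inv_smul g l⟩
        rw [hcompat g p₀ (g⁻¹ • l), hg, smul_inv_smul]
        exact hpl
      · rintro ⟨m, ⟨hmO, hm⟩, rfl⟩
        refine ⟨hOinv g m hmO, ?_⟩
        rw [← hg]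
        exact (hcompat g p₀ m).mp hm
    rw [hn]
    simp only
    rw [himg, card_image_of_injective _ (MulAction.injective g)]
  set F : Finset (P × L) := univ.filter (fun pl => pl.2 ∈ O ∧ Q.inc pl.1 pl.2) with hF
  have hF1 : F.card = ∑ p : P, n p := by
    rw [card_eq_sum_card_fiberwise (f := Prod.fst) (t := univ) (fun x _ => mem_univ _)]
    refine Finset.sum_congr rfl fun p _ => ?_
    have : F.filter (fun pl => pl.1 = p)
        = (univ.filter fun l => l ∈ O ∧ Q.inc p l).image (fun l => (p, l)) := by
      ext pl
      simp only [hF, mem_image, mem_filter, mem_univ, true_and, Finset.filter_filter]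
      constructor
      · rintro ⟨⟨hO2, hinc⟩, hp1⟩
        exact ⟨pl.2, ⟨hO2, hp1 ▸ hinc⟩, by rw [← hp1]⟩
      · rintro ⟨l, ⟨hlO, hl⟩, rfl⟩
        exact ⟨⟨hlO, hl⟩, rfl⟩
    rw [this, card_image_of_injective]
    intro a b hab
    exact congrArg Prod.snd hab
  have hF2 : F.card = (univ.filter fun l => l ∈ O).card * (s + 1) := by
    rw [card_eq_sum_card_fiberwise (f := Prod.snd) (t := univ) (fun x _ => mem_univ _)]
    have hfib : ∀ l : L, (F.filter (fun pl => pl.2 = l)).card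
        = if l ∈ O then s + 1 else 0 := by
      intro l
      by_cases hlO : l ∈ O
      · rw [if_pos hlO]
        have : F.filter (fun pl => pl.2 = l)
            = (univ.filter fun p => Q.inc p l).image (fun p => (p, l)) := by
          ext pl
          simp only [hF, mem_image, mem_filter, mem_univ, true_and, Finset.filter_filter]
          constructor
          · rintro ⟨⟨hO2, hinc⟩, hp2⟩
            exact ⟨pl.1, hp2 ▸ hinc, by rw [← hp2]⟩
          · rintro ⟨p, hp, rfl⟩
            exact ⟨⟨hlO, hp⟩, rfl⟩
        rw [this, card_image_of_injective, ptsOn_card Q l]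
        intro a b hab
        exact congrArg Prod.fst hab
      · rw [if_neg hlO, card_eq_zero]
        ext pl
        simp only [hF, mem_filter, mem_univ, true_and, notMem_empty, iff_false, Finset.filter_filter]
        rintro ⟨⟨hO2, -⟩, hp2⟩
        exact hlO (hp2 ▸ hO2)
    rw [Finset.sum_congr rfl (fun l _ => hfib l), ← Finset.sum_filter,
      Finset.sum_const, smul_eq_mul]
  have hcardO : Nat.card O = (univ.filter fun l => l ∈ O).card := by
    rw [Nat.card_eq_fintype_card]
    exact Fintype.card_subtype _
  have hsum : ∑ p : P, n p = Fintype.card P * n p₀ := by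
    rw [Finset.sum_congr rfl (fun p _ => hconst p), Finset.sum_const, smul_eq_mul,
      card_univ]
  have key : (univ.filter fun l => l ∈ O).card * (s + 1)
      = ((s * t + 1) * n p₀) * (s + 1) := by
    rw [← hF2, hF1, hsum, card_P Q p₀]
    ring
  have : (univ.filter fun l => l ∈ O).card = (s * t + 1) * n p₀ :=
    Nat.eq_of_mul_eq_mul_right (by omega) key
  rw [hcardO, this]
  exact Dvd.intro _ rfl

/-- The size of any line orbit of a point-transitive automorphism group of a
finite generalised quadrangle of order (s,t) is divisible by st+1. -/
theorem card_line_orbit_dvd {P L : Type*} [Fintype P] [Fintype L]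
    {s t : ℕ} (hs : 1 ≤ s) (ht : 1 ≤ t) (Q : GenQuadrangle P L s t)
    (G : Type*) [Group G] [MulAction G P] [MulAction G L]
    (hcompat : ∀ (g : G) (p : P) (l : L), Q.inc p l ↔ Q.inc (g • p) (g • l))
    [MulAction.IsPretransitive G P] (l₀ : L) :
    (s * t + 1) ∣ Nat.card (MulAction.orbit G l₀) :=
  card_line_orbit_dvd_aux hs ht Q G hcompat l₀
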